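/- Orthogonal-alignment (Procrustes) bound from the proof of Lemma B3: Let F̂ and F̃ be n×k real matrices with F̂ᵀF̂ = n·I_k and F̃ᵀF̃ = n·I_k. Then there exist k×k real orthogonal matrices O₁ and O₂ such that ‖F̂O₁ − F̃O₂‖_F² ≤ n·(2k − 2‖F̂ᵀF̃/n‖_F²). -/

import Mathlib

open MeasureTheory Matrix

/-- Frobenius norm of a real matrix. -/
noncomputable def frobNorm {m n : Type*} [Fintype m] [Fintype n] (A : Matrix m n ℝ) : ℝ :=
  Real.sqrt (∑ i, ∑ j, (A i j) ^ 2)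

/-- ℓ2 operator norm (largest singular value) of a real matrix. -/
noncomputable def opNorm {m n : Type*} [Fintype m] [Fintype n] [DecidableEq n]
    (A : Matrix m n ℝ) : ℝ :=
  ‖LinearMap.toContinuousLinearMap (Matrix.toEuclideanLin A)‖

/-- Entrywise maximum absolute value of a real matrix. -/
noncomputable def maxNorm {m n : Type*} [Fintype m] [Fintype n] (A : Matrix m n ℝ) : ℝ :=
  ⨆ i, ⨆ j, |A i j|

/-- Smallest eigenvalue of a real symmetric matrix, via the Rayleigh quotient
(infimum of the quadratic form over the unit sphere). -/
noncomputable def lambdaMin {n : Type*} [Fintype n] (A : Matrix n n ℝ) : ℝ :=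
  ⨅ x : {x : n → ℝ // ∑ i, x i ^ 2 = 1}, ∑ i, ∑ j, x.1 i * A i j * x.1 j

/-- Largest eigenvalue of a real symmetric matrix, via the Rayleigh quotient
(supremum of the quadratic form over the unit sphere). -/
noncomputable def lambdaMax {n : Type*} [Fintype n] (A : Matrix n n ℝ) : ℝ :=
  ⨆ x : {x : n → ℝ // ∑ i, x i ^ 2 = 1}, ∑ i, ∑ j, x.1 i * A i j * x.1 j

/-- Submatrix of `U` assembling the columns indexed by the finite set `ξ`. -/
def colSub {n p : ℕ} (U : Matrix (Fin n) (Fin p) ℝ) (ξ : Finset (Fin p)) :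
    Matrix (Fin n) {j : Fin p // j ∈ ξ} ℝ :=
  Matrix.of fun i j => U i j.1


lemma star_eq_transpose_real {k : ℕ} (M : Matrix (Fin k) (Fin k) ℝ) : star M = Mᵀ := by
  rw [Matrix.star_eq_conjTranspose, Matrix.conjTranspose_eq_transpose_of_trivial]

lemma conj_mul_helper {k : ℕ} {V : Matrix (Fin k) (Fin k) ℝ} (h : star V * V = 1)
    (f g : Fin k → ℝ) :
    (V * Matrix.diagonal f * star V) * (V * Matrix.diagonal g * star V) =
      V * Matrix.diagonal (fun i => f i * g i) * star V := by
  have key : ∀ X : Matrix (Fin k) (Fin k) ℝ, star V * (V * X) = X := by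
    intro X; rw [← Matrix.mul_assoc, h, Matrix.one_mul]
  simp only [Matrix.mul_assoc]
  rw [key, ← Matrix.mul_assoc (Matrix.diagonal f), Matrix.diagonal_mul_diagonal]

lemma conj_trace_helper {k : ℕ} {V : Matrix (Fin k) (Fin k) ℝ} (h : star V * V = 1)
    (f : Fin k → ℝ) :
    (V * Matrix.diagonal f * star V).trace = ∑ i, f i := by
  rw [Matrix.trace_mul_cycle, h, Matrix.one_mul, Matrix.trace_diagonal]

lemma core_polar {k : ℕ} (c : ℝ) (hc : 0 < c) (A : Matrix (Fin k) (Fin k) ℝ)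
    (hdet : A.det ≠ 0)
    (hbound : ∀ v : Fin k → ℝ, (A *ᵥ v) ⬝ᵥ (A *ᵥ v) ≤ c ^ 2 * (v ⬝ᵥ v)) :
    ∃ O : Matrix (Fin k) (Fin k) ℝ, Oᵀ * O = 1 ∧
      (Aᵀ * A).trace ≤ c * (Oᵀ * A).trace := by
  have hS : (Aᵀ * A).IsHermitian := by
    have := Matrix.isHermitian_conjTranspose_mul_self A
    rwa [Matrix.conjTranspose_eq_transpose_of_trivial] at this
  set S := Aᵀ * A with hSdef
  set lam := hS.eigenvalues with hlam
  set V : Matrix (Fin k) (Fin k) ℝ := (hS.eigenvectorUnitary : Matrix (Fin k) (Fin k) ℝ) with hVdef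
  have hV1 : V * star V = 1 := (Matrix.mem_unitaryGroup_iff).mp (hS.eigenvectorUnitary).2
  have hV2 : star V * V = 1 := (Matrix.mem_unitaryGroup_iff').mp (hS.eigenvectorUnitary).2
  have hSpec : S = V * Matrix.diagonal lam * star V := by
    have := hS.spectral_theorem
    simpa using this
  have heig : ∀ i, 0 ≤ lam i ∧ lam i ≤ c ^ 2 := by
    intro i
    set v : Fin k → ℝ := ⇑(hS.eigenvectorBasis i) with hv
    have hmv : S *ᵥ v = lam i • v := hS.mulVec_eigenvectorBasis i
    have hnorm : v ⬝ᵥ v = 1 := by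
      have h1 : ‖hS.eigenvectorBasis i‖ = 1 := hS.eigenvectorBasis.orthonormal.1 i
      have h2 : (inner ℝ (hS.eigenvectorBasis i) (hS.eigenvectorBasis i) : ℝ) = 1 := by
        rw [real_inner_self_eq_norm_sq, h1]; norm_num
      rw [PiLp.inner_apply] at h2
      simpa [dotProduct, v, sq] using h2
    have key : v ⬝ᵥ (S *ᵥ v) = lam i := by
      rw [hmv, dotProduct_smul, hnorm]; simp
    have key2 : v ⬝ᵥ (S *ᵥ v) = (A *ᵥ v) ⬝ᵥ (A *ᵥ v) := by
      rw [hSdef, ← Matrix.mulVec_mulVec, Matrix.dotProduct_mulVec, Matrix.vecMul_transpose]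
    constructor
    · rw [← key, key2]
      exact Finset.sum_nonneg fun j _ => mul_self_nonneg _
    · rw [← key, key2]
      calc (A *ᵥ v) ⬝ᵥ (A *ᵥ v) ≤ c ^ 2 * (v ⬝ᵥ v) := hbound v
        _ = c ^ 2 := by rw [hnorm, mul_one]
  have heigpos : ∀ i, 0 < lam i := by
    have hdetS : S.det ≠ 0 := by
      rw [hSdef, Matrix.det_mul, Matrix.det_transpose]
      exact mul_ne_zero hdet hdet
    have hprod : S.det = ∏ i, lam i := by
      have := hS.det_eq_prod_eigenvalues
      simpa using this
    intro i
    rcases (heig i).1.lt_or_eq with h | h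
    · exact h
    · exfalso; exact hdetS (hprod.trans (Finset.prod_eq_zero (Finset.mem_univ i) h.symm))
  have hsqrt_pos : ∀ i, 0 < Real.sqrt (lam i) := fun i => Real.sqrt_pos.mpr (heigpos i)
  set Pinv : Matrix (Fin k) (Fin k) ℝ :=
    V * Matrix.diagonal (fun i => (Real.sqrt (lam i))⁻¹) * star V with hPinvdef
  have hPinvT : Pinvᵀ = Pinv := by
    rw [hPinvdef, star_eq_transpose_real]
    rw [Matrix.transpose_mul, Matrix.transpose_mul, Matrix.transpose_transpose,
      Matrix.diagonal_transpose, Matrix.mul_assoc]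
  refine ⟨A * Pinv, ?_, ?_⟩
  · rw [Matrix.transpose_mul, hPinvT, Matrix.mul_assoc, ← Matrix.mul_assoc Aᵀ A Pinv,
      ← hSdef, hSpec, ← Matrix.mul_assoc Pinv, hPinvdef, conj_mul_helper hV2,
      conj_mul_helper hV2]
    have : (fun i => (Real.sqrt (lam i))⁻¹ * lam i * ((Real.sqrt (lam i))⁻¹)) = fun _ => (1:ℝ) := by
      funext i
      have h2 : Real.sqrt (lam i) * Real.sqrt (lam i) = lam i := Real.mul_self_sqrt (heig i).1
      field_simp
      rw [sq, h2]; exact div_self (heigpos i).ne'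
    rw [this, Matrix.diagonal_one, Matrix.mul_one, hV1]
  · have hOA : ((A * Pinv)ᵀ * A).trace = ∑ i, Real.sqrt (lam i) := by
      rw [Matrix.transpose_mul, hPinvT, Matrix.mul_assoc, ← hSdef, hSpec, hPinvdef,
        conj_mul_helper hV2]
      rw [conj_trace_helper hV2]
      congr 1; funext i
      have h2 : Real.sqrt (lam i) * Real.sqrt (lam i) = lam i := Real.mul_self_sqrt (heig i).1
      field_simp
      rw [div_eq_iff (hsqrt_pos i).ne', h2]
    have hSA : S.trace = ∑ i, lam i := by
      rw [hSpec, conj_trace_helper hV2]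
    rw [hSA, hOA, Finset.mul_sum]
    apply Finset.sum_le_sum
    intro i _
    have h1 : Real.sqrt (lam i) ≤ c := by
      have := Real.sqrt_le_sqrt (heig i).2
      rwa [Real.sqrt_sq hc.le] at this
    calc lam i = Real.sqrt (lam i) * Real.sqrt (lam i) := (Real.mul_self_sqrt (heig i).1).symm
      _ ≤ c * Real.sqrt (lam i) := by
          apply mul_le_mul_of_nonneg_right h1 (Real.sqrt_nonneg _)


lemma entry_bound {k : ℕ} {O : Matrix (Fin k) (Fin k) ℝ} (hO : Oᵀ * O = 1) (i j : Fin k) :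
    O i j ∈ Set.Icc (-1 : ℝ) 1 := by
  have h1 : (Oᵀ * O) j j = (1 : Matrix (Fin k) (Fin k) ℝ) j j := by rw [hO]
  rw [Matrix.mul_apply, Matrix.one_apply_eq] at h1
  have h2 : O i j * O i j ≤ ∑ l, Oᵀ j l * O l j := by
    have : ∀ l ∈ Finset.univ, (0:ℝ) ≤ Oᵀ j l * O l j := by
      intro l _; rw [Matrix.transpose_apply]; exact mul_self_nonneg _
    have := Finset.single_le_sum this (Finset.mem_univ i)
    simpa [Matrix.transpose_apply] using this
  rw [h1] at h2
  constructor <;> nlinarith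

lemma trace_diag_bound {k : ℕ} {O : Matrix (Fin k) (Fin k) ℝ} (hO : Oᵀ * O = 1) :
    Oᵀ.trace ≤ (k : ℝ) := by
  rw [Matrix.trace]
  calc ∑ i, Oᵀ.diag i ≤ ∑ _i : Fin k, (1:ℝ) := by
        apply Finset.sum_le_sum
        intro i _
        exact (entry_bound hO i i).2
    _ = k := by simp

lemma isCompact_orth {k : ℕ} :
    IsCompact {O : Matrix (Fin k) (Fin k) ℝ | Oᵀ * O = 1} := by
  have hK : IsCompact (Set.pi Set.univ fun _ : Fin k =>
      Set.pi Set.univ fun _ : Fin k => Set.Icc (-1 : ℝ) 1) :=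
    isCompact_univ_pi fun _ => isCompact_univ_pi fun _ => isCompact_Icc
  apply hK.of_isClosed_subset
  · exact isClosed_eq ((continuous_id.matrix_transpose).matrix_mul continuous_id)
      continuous_const
  · intro O hO
    rw [Set.mem_univ_pi]
    intro i
    rw [Set.mem_univ_pi]
    intro j
    exact entry_bound hO i j

lemma dot_cs {k : ℕ} (x y : Fin k → ℝ) : (x ⬝ᵥ y) ^ 2 ≤ (x ⬝ᵥ x) * (y ⬝ᵥ y) := by
  have := Finset.sum_mul_sq_le_sq_mul_sq Finset.univ x y
  simpa [dotProduct, sq] using this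

lemma dot_cs' {k : ℕ} {c : ℝ} (hc : 0 ≤ c) (x y : Fin k → ℝ)
    (hx : x ⬝ᵥ x ≤ c ^ 2 * (y ⬝ᵥ y)) : x ⬝ᵥ y ≤ c * (y ⬝ᵥ y) := by
  have hyy : 0 ≤ y ⬝ᵥ y := Finset.sum_nonneg fun j _ => mul_self_nonneg _
  have h1 : (x ⬝ᵥ y) ^ 2 ≤ (c * (y ⬝ᵥ y)) ^ 2 := by
    calc (x ⬝ᵥ y) ^ 2 ≤ (x ⬝ᵥ x) * (y ⬝ᵥ y) := dot_cs x y
      _ ≤ c ^ 2 * (y ⬝ᵥ y) * (y ⬝ᵥ y) := by nlinarith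
      _ = (c * (y ⬝ᵥ y)) ^ 2 := by ring
  calc x ⬝ᵥ y ≤ |x ⬝ᵥ y| := le_abs_self _
    _ ≤ |c * (y ⬝ᵥ y)| := by
        rw [← Real.sqrt_sq_eq_abs, ← Real.sqrt_sq_eq_abs]
        exact Real.sqrt_le_sqrt h1
    _ = c * (y ⬝ᵥ y) := abs_of_nonneg (by positivity)


lemma exists_orth_trace {k : ℕ} (c : ℝ) (hc : 0 < c) (A : Matrix (Fin k) (Fin k) ℝ)
    (hbound : ∀ v : Fin k → ℝ, (A *ᵥ v) ⬝ᵥ (A *ᵥ v) ≤ c ^ 2 * (v ⬝ᵥ v)) :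
    ∃ O : Matrix (Fin k) (Fin k) ℝ, Oᵀ * O = 1 ∧
      (Aᵀ * A).trace ≤ c * (Oᵀ * A).trace := by
  have hTne : Set.Nonempty {O : Matrix (Fin k) (Fin k) ℝ | Oᵀ * O = 1} :=
    ⟨1, by simp [Matrix.transpose_one]⟩
  have hf : Continuous fun O : Matrix (Fin k) (Fin k) ℝ => (Oᵀ * A).trace :=
    ((continuous_id.matrix_transpose).matrix_mul continuous_const).matrix_trace
  obtain ⟨O₀, hO₀, hmax⟩ := isCompact_orth.exists_isMaxOn hTne hf.continuousOn
  refine ⟨O₀, hO₀, le_of_forall_pos_le_add ?_⟩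
  intro δ hδ
  set F := (O₀ᵀ * A).trace with hF
  set tA := A.trace with htA
  set M := |c * k + F - 2 * tA| + 1 with hMdef
  have hMpos : 0 < M := by positivity
  have hmin : 0 < min 1 (δ / M) := lt_min one_pos (div_pos hδ hMpos)
  obtain ⟨ε, hε⟩ := ((Set.Ioo_infinite hmin).diff (Matrix.finite_spectrum (-A))).nonempty
  obtain ⟨⟨hε0, hεlt⟩, hεnotspec⟩ := hε
  have hεM : ε * M < δ := by
    have h1 : ε < δ / M := lt_of_lt_of_le hεlt (min_le_right _ _)
    exact (lt_div_iff₀ hMpos).mp h1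
  set Aε := A + ε • (1 : Matrix (Fin k) (Fin k) ℝ) with hAε
  have hdet : Aε.det ≠ 0 := by
    rw [spectrum.notMem_iff] at hεnotspec
    have h2 : algebraMap ℝ (Matrix (Fin k) (Fin k) ℝ) ε - (-A) = Aε := by
      rw [Algebra.algebraMap_eq_smul_one, sub_neg_eq_add, add_comm]
    rw [h2] at hεnotspec
    exact isUnit_iff_ne_zero.mp ((Matrix.isUnit_iff_isUnit_det _).mp hεnotspec)
  have hboundε : ∀ v : Fin k → ℝ, (Aε *ᵥ v) ⬝ᵥ (Aε *ᵥ v) ≤ (c + ε) ^ 2 * (v ⬝ᵥ v) := by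
    intro v
    have hmv : Aε *ᵥ v = A *ᵥ v + ε • v := by
      rw [hAε, Matrix.add_mulVec, Matrix.smul_mulVec, Matrix.one_mulVec]
    have hvv : (0:ℝ) ≤ v ⬝ᵥ v := Finset.sum_nonneg fun j _ => mul_self_nonneg _
    have hcs : (A *ᵥ v) ⬝ᵥ v ≤ c * (v ⬝ᵥ v) := dot_cs' hc.le _ v (hbound v)
    have hexp : (A *ᵥ v + ε • v) ⬝ᵥ (A *ᵥ v + ε • v)
        = (A *ᵥ v) ⬝ᵥ (A *ᵥ v) + 2 * ε * ((A *ᵥ v) ⬝ᵥ v) + ε ^ 2 * (v ⬝ᵥ v) := by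
      simp only [add_dotProduct, dotProduct_add, smul_dotProduct,
        dotProduct_smul, smul_eq_mul, dotProduct_comm v (A *ᵥ v)]
      ring
    rw [hmv, hexp]
    nlinarith [hbound v]
  obtain ⟨Oε, hOε, hcore⟩ := core_polar (c + ε) (by linarith) Aε hdet hboundε
  have hmax' : (Oεᵀ * A).trace ≤ F := hmax hOε
  have h3 : Oεᵀ.trace ≤ (k:ℝ) := trace_diag_bound hOε
  have hOεT : (Oεᵀ * Aε).trace = (Oεᵀ * A).trace + ε * Oεᵀ.trace := by
    rw [hAε, Matrix.mul_add, Matrix.trace_add, mul_smul_comm, Matrix.mul_one,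
      Matrix.trace_smul, smul_eq_mul]
  have hAεT : (Aεᵀ * Aε).trace = (Aᵀ * A).trace + ε * (2 * tA) + ε ^ 2 * k := by
    simp only [hAε, Matrix.transpose_add, Matrix.transpose_smul, Matrix.transpose_one,
      Matrix.add_mul, Matrix.mul_add, Matrix.smul_mul, Matrix.mul_smul, Matrix.one_mul,
      Matrix.mul_one, Matrix.trace_add, Matrix.trace_smul, Matrix.trace_one,
      Matrix.trace_transpose, smul_smul, smul_eq_mul, Fintype.card_fin]
    ring
  rw [hAεT, hOεT] at hcore
  -- chain
  have hstep : (Oεᵀ * A).trace + ε * Oεᵀ.trace ≤ F + ε * k := by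
    have := mul_le_mul_of_nonneg_left h3 hε0.le
    linarith
  have hchain : (Aᵀ * A).trace + ε * (2 * tA) + ε ^ 2 * k ≤ (c + ε) * (F + ε * k) := by
    calc (Aᵀ * A).trace + ε * (2 * tA) + ε ^ 2 * k
        ≤ (c + ε) * ((Oεᵀ * A).trace + ε * Oεᵀ.trace) := hcore
      _ ≤ (c + ε) * (F + ε * k) := by
          apply mul_le_mul_of_nonneg_left hstep (by linarith)
  have key : (Aᵀ * A).trace ≤ c * F + ε * (c * k + F - 2 * tA) := by nlinarith [hchain]
  have habs : ε * (c * k + F - 2 * tA) ≤ ε * M := by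
    apply mul_le_mul_of_nonneg_left _ hε0.le
    rw [hMdef]
    calc c * ↑k + F - 2 * tA ≤ |c * ↑k + F - 2 * tA| := le_abs_self _
      _ ≤ |c * ↑k + F - 2 * tA| + 1 := by linarith
  linarith

lemma gram_mulVec {n k : ℕ} {F : Matrix (Fin n) (Fin k) ℝ}
    (hF : Fᵀ * F = (n : ℝ) • (1 : Matrix (Fin k) (Fin k) ℝ)) (v : Fin k → ℝ) :
    (F *ᵥ v) ⬝ᵥ (F *ᵥ v) = (n : ℝ) * (v ⬝ᵥ v) := by
  rw [Matrix.dotProduct_mulVec, ← Matrix.mulVec_transpose, Matrix.mulVec_mulVec, hF,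
    Matrix.smul_mulVec, Matrix.one_mulVec, smul_dotProduct, smul_eq_mul]

lemma bound_A {n k : ℕ} {Fhat Ftilde : Matrix (Fin n) (Fin k) ℝ}
    (hFhat : Fhatᵀ * Fhat = (n : ℝ) • (1 : Matrix (Fin k) (Fin k) ℝ))
    (hFtilde : Ftildeᵀ * Ftilde = (n : ℝ) • (1 : Matrix (Fin k) (Fin k) ℝ))
    (v : Fin k → ℝ) :
    ((Fhatᵀ * Ftilde) *ᵥ v) ⬝ᵥ ((Fhatᵀ * Ftilde) *ᵥ v) ≤ (n : ℝ) ^ 2 * (v ⬝ᵥ v) := by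
  set y := Ftilde *ᵥ v with hy
  set z := (Fhatᵀ * Ftilde) *ᵥ v with hz
  have hzy : z = Fhatᵀ *ᵥ y := by rw [hz, hy, Matrix.mulVec_mulVec]
  have hzz : z ⬝ᵥ z = (Fhat *ᵥ z) ⬝ᵥ y := by
    nth_rewrite 2 [hzy]
    rw [Matrix.dotProduct_mulVec, Matrix.vecMul_transpose]
  have hyy : y ⬝ᵥ y = (n : ℝ) * (v ⬝ᵥ v) := gram_mulVec hFtilde v
  have hFz : (Fhat *ᵥ z) ⬝ᵥ (Fhat *ᵥ z) = (n : ℝ) * (z ⬝ᵥ z) := gram_mulVec hFhat z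
  have hcs : ((Fhat *ᵥ z) ⬝ᵥ y) ^ 2 ≤ ((Fhat *ᵥ z) ⬝ᵥ (Fhat *ᵥ z)) * (y ⬝ᵥ y) := by
    have := Finset.sum_mul_sq_le_sq_mul_sq Finset.univ (Fhat *ᵥ z) y
    simpa [dotProduct, sq] using this
  have hzznn : 0 ≤ z ⬝ᵥ z := Finset.sum_nonneg fun j _ => mul_self_nonneg _
  have hvv : 0 ≤ v ⬝ᵥ v := Finset.sum_nonneg fun j _ => mul_self_nonneg _
  rcases hzznn.eq_or_lt with h | h
  · rw [← h]; positivity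
  · have key : (z ⬝ᵥ z) ^ 2 ≤ (n : ℝ) ^ 2 * (v ⬝ᵥ v) * (z ⬝ᵥ z) := by
      calc (z ⬝ᵥ z) ^ 2 = ((Fhat *ᵥ z) ⬝ᵥ y) ^ 2 := by rw [hzz]
        _ ≤ ((Fhat *ᵥ z) ⬝ᵥ (Fhat *ᵥ z)) * (y ⬝ᵥ y) := hcs
        _ = (n : ℝ) ^ 2 * (v ⬝ᵥ v) * (z ⬝ᵥ z) := by rw [hFz, hyy]; ring
    nlinarith [key, h]

lemma frob_sq_eq_trace {n k : ℕ} (B : Matrix (Fin n) (Fin k) ℝ) :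
    frobNorm B ^ 2 = (Bᵀ * B).trace := by
  rw [frobNorm, Real.sq_sqrt (by positivity)]
  rw [Matrix.trace]
  simp only [Matrix.diag_apply, Matrix.mul_apply, Matrix.transpose_apply, sq]
  exact Finset.sum_comm


/-- orthogonal-alignment / Procrustes bound from the proof of Lemma B3.
If `F̂ᵀF̂ = n I_k` and `F̃ᵀF̃ = n I_k`, then there exist `k × k` orthogonal matrices
`O₁, O₂` with `‖F̂O₁ - F̃O₂‖_F² ≤ n (2k - 2 ‖F̂ᵀF̃/n‖_F²)`. -/
theorem procrustes_alignment_bound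
    (n k : ℕ) (hn : 0 < n)
    (Fhat Ftilde : Matrix (Fin n) (Fin k) ℝ)
    (hFhat : Fhatᵀ * Fhat = (n : ℝ) • (1 : Matrix (Fin k) (Fin k) ℝ))
    (hFtilde : Ftildeᵀ * Ftilde = (n : ℝ) • (1 : Matrix (Fin k) (Fin k) ℝ)) :
    ∃ O₁ O₂ : Matrix (Fin k) (Fin k) ℝ,
      O₁ᵀ * O₁ = 1 ∧ O₂ᵀ * O₂ = 1 ∧
      frobNorm (Fhat * O₁ - Ftilde * O₂) ^ 2 ≤
        (n : ℝ) * (2 * k - 2 * frobNorm (((n : ℝ)⁻¹) • (Fhatᵀ * Ftilde)) ^ 2) := by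
  have hn' : (0 : ℝ) < n := by exact_mod_cast hn
  set A := Fhatᵀ * Ftilde with hA
  obtain ⟨O, hO, hineq⟩ := exists_orth_trace (n : ℝ) hn' A (bound_A hFhat hFtilde)
  refine ⟨O, 1, hO, by simp, ?_⟩
  rw [Matrix.mul_one]
  set tOA := (Oᵀ * A).trace with htOA
  set T := (Aᵀ * A).trace with hT
  -- LHS computation
  have e1 : (Fhat * O - Ftilde)ᵀ * (Fhat * O - Ftilde) =
      Oᵀ * (Fhatᵀ * (Fhat * O)) - Oᵀ * (Fhatᵀ * Ftilde)
        - Ftildeᵀ * (Fhat * O) + Ftildeᵀ * Ftilde := by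
    rw [Matrix.transpose_sub, Matrix.transpose_mul, Matrix.sub_mul, Matrix.mul_sub,
      Matrix.mul_sub]
    simp only [Matrix.mul_assoc]
    abel
  have t1 : (Oᵀ * (Fhatᵀ * (Fhat * O))).trace = (n : ℝ) * k := by
    rw [← Matrix.mul_assoc Fhatᵀ Fhat O, hFhat, Matrix.smul_mul, Matrix.one_mul,
      Matrix.mul_smul, hO, Matrix.trace_smul, Matrix.trace_one, smul_eq_mul,
      Fintype.card_fin]
  have t2 : (Ftildeᵀ * (Fhat * O)).trace = tOA := by
    rw [← Matrix.trace_transpose (Ftildeᵀ * (Fhat * O)), Matrix.transpose_mul,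
      Matrix.transpose_mul, Matrix.transpose_transpose, htOA, hA, Matrix.mul_assoc]
  have t4 : (Ftildeᵀ * Ftilde).trace = (n : ℝ) * k := by
    rw [hFtilde, Matrix.trace_smul, Matrix.trace_one, smul_eq_mul, Fintype.card_fin]
  have hLHS : frobNorm (Fhat * O - Ftilde) ^ 2 = 2 * (n : ℝ) * k - 2 * tOA := by
    rw [frob_sq_eq_trace, e1, Matrix.trace_add, Matrix.trace_sub, Matrix.trace_sub,
      t1, t2, t4, htOA]
    ring
  -- RHS computation
  have hRHS : frobNorm (((n : ℝ)⁻¹) • A) ^ 2 = (n : ℝ)⁻¹ * ((n : ℝ)⁻¹ * T) := by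
    rw [frob_sq_eq_trace, Matrix.transpose_smul, Matrix.smul_mul, Matrix.mul_smul,
      Matrix.trace_smul, Matrix.trace_smul, smul_eq_mul, smul_eq_mul, hT]
  rw [hLHS, hRHS]
  have h5 : (n : ℝ) * (2 * k - 2 * ((n : ℝ)⁻¹ * ((n : ℝ)⁻¹ * T))) =
      2 * (n : ℝ) * k - 2 * ((n : ℝ)⁻¹ * T) := by
    field_simp
  rw [h5]
  have h6 : (n : ℝ)⁻¹ * T ≤ tOA := by
    have := mul_le_mul_of_nonneg_left hineq (inv_nonneg.mpr hn'.le)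
    rwa [← mul_assoc, inv_mul_cancel₀ hn'.ne', one_mul] at this
  linarith
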